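/- Let 𝒫 be a configuration of n points in general position in the plane whose convex hull has size 3. Let P, Q, R be three distinct points of 𝒫 which are not exactly the three vertices of the convex hull. Then n(P,Q) + n(P,R) + n(Q,R) < n² − 4n + 3. -/

import Mathlib

open scoped Classical

noncomputable section

/-- The set Pts is in general position: no three distinct points are collinear. -/
def GenPos (Pts : Finset (ℝ × ℝ)) : Prop :=
  ∀ A ∈ Pts, ∀ B ∈ Pts, ∀ C ∈ Pts, A ≠ B → A ≠ C → B ≠ C →
    ¬ Collinear ℝ ({A, B, C} : Set (ℝ × ℝ))

/-- `sepCount Pts P Q` is the number of unordered pairs `{R, S}` of points of `Pts \ {P, Q}`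
such that the line through `R` and `S` strictly separates `P` and `Q`. -/
def sepCount (Pts : Finset (ℝ × ℝ)) (P Q : ℝ × ℝ) : ℕ :=
  ((Finset.powersetCard 2 (Pts \ {P, Q})).filter
    (fun s => (affineSpan ℝ (↑s : Set (ℝ × ℝ))).SOppSide P Q)).card

/-- The vertices of the convex hull of `Pts` (its extreme points). -/
def hullVertices (Pts : Finset (ℝ × ℝ)) : Set (ℝ × ℝ) :=
  Set.extremePoints ℝ (convexHull ℝ (↑Pts : Set (ℝ × ℝ)))

/-- `Q : ZMod k → ℝ × ℝ` lists the points of `S` in convex position, in cyclic order: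
`Q` is an injective enumeration of `S` and, for every `i`, all points of `S` other than
`Q i` and `Q (i+1)` lie strictly on the same side of the line through `Q i` and `Q (i+1)`
(i.e. each consecutive pair spans an edge of the convex hull of `S`). -/
def IsConvexCycle (k : ℕ) (S : Set (ℝ × ℝ)) (Q : ZMod k → ℝ × ℝ) : Prop :=
  Function.Injective Q ∧ Set.range Q = S ∧
    ∀ i : ZMod k, ∀ x ∈ S, ∀ y ∈ S,
      x ∉ ({Q i, Q (i + 1)} : Set (ℝ × ℝ)) → y ∉ ({Q i, Q (i + 1)} : Set (ℝ × ℝ)) →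
        (affineSpan ℝ ({Q i, Q (i + 1)} : Set (ℝ × ℝ))).SSameSide x y

/-! ### Auxiliary material -/

/-- Twice the signed area of the triangle `a b c`. -/
def det3 (a b c : ℝ × ℝ) : ℝ :=
  (b.1 - a.1) * (c.2 - a.2) - (b.2 - a.2) * (c.1 - a.1)

lemma det3_eq_zero_of_collinear {a b c : ℝ × ℝ}
    (h : Collinear ℝ ({a, b, c} : Set (ℝ × ℝ))) : det3 a b c = 0 := by
  rw [collinear_iff_exists_forall_eq_smul_vadd] at h
  obtain ⟨p₀, v, hv⟩ := h
  obtain ⟨ta, ha⟩ := hv a (by simp)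
  obtain ⟨tb, hb⟩ := hv b (by simp)
  obtain ⟨tc, hc⟩ := hv c (by simp)
  subst ha hb hc
  simp only [det3, vadd_eq_add, Prod.fst_add, Prod.snd_add, Prod.smul_fst, Prod.smul_snd,
    smul_eq_mul]
  ring

lemma collinear_of_det3_eq_zero {a b c : ℝ × ℝ} (h : det3 a b c = 0) :
    Collinear ℝ ({a, b, c} : Set (ℝ × ℝ)) := by
  by_cases hab : a = b
  · subst hab
    rw [Set.insert_idem]
    exact collinear_pair ℝ a c
  · rw [collinear_iff_exists_forall_eq_smul_vadd]
    refine ⟨a, b - a, ?_⟩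
    intro p hp
    simp only [Set.mem_insert_iff, Set.mem_singleton_iff] at hp
    rcases hp with rfl | rfl | rfl
    · exact ⟨0, by simp⟩
    · exact ⟨1, by simp⟩
    · by_cases h1 : b.1 - a.1 = 0
      · have h2 : b.2 - a.2 ≠ 0 := by
          intro h2
          apply hab
          exact Prod.ext (by linarith [h1]) (by linarith [h2])
        refine ⟨(p.2 - a.2) / (b.2 - a.2), ?_⟩
        have hp1 : p.1 = a.1 := by
          simp only [det3] at h
          rw [h1, zero_mul, zero_sub, neg_eq_zero] at h
          rcases mul_eq_zero.mp h with h' | h'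
          · exact absurd h' h2
          · linarith
        apply Prod.ext
        · simp only [vadd_eq_add, Prod.fst_add, Prod.smul_fst, Prod.fst_sub, smul_eq_mul]
          rw [h1]; simpa using hp1
        · simp only [vadd_eq_add, Prod.snd_add, Prod.smul_snd, Prod.snd_sub, smul_eq_mul]
          field_simp
          ring
      · refine ⟨(p.1 - a.1) / (b.1 - a.1), ?_⟩
        apply Prod.ext
        · simp only [vadd_eq_add, Prod.fst_add, Prod.smul_fst, Prod.fst_sub, smul_eq_mul]
          field_simp
          ring
        · simp only [vadd_eq_add, Prod.snd_add, Prod.smul_snd, Prod.snd_sub, smul_eq_mul]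
          simp only [det3] at h
          field_simp
          nlinarith [h]

lemma det3_mul_neg_of_sOppSide {a b x y : ℝ × ℝ}
    (h : (affineSpan ℝ ({a, b} : Set (ℝ × ℝ))).SOppSide x y)
    (hx : ¬ Collinear ℝ ({a, b, x} : Set (ℝ × ℝ)))
    (hy : ¬ Collinear ℝ ({a, b, y} : Set (ℝ × ℝ))) :
    det3 a b x * det3 a b y < 0 := by
  obtain ⟨p, hp, hbtw⟩ := h.exists_sbtw
  have hdp : det3 a b p = 0 := by
    apply det3_eq_zero_of_collinear
    have h' := collinear_insert_of_mem_affineSpan_pair (k := ℝ) hp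
    exact h'.subset (by
      intro z hz
      simp only [Set.mem_insert_iff, Set.mem_singleton_iff] at hz ⊢
      tauto)
  obtain ⟨t, ht, hpe⟩ := hbtw.1
  have ht0 : t ≠ 0 := by
    rintro rfl
    apply hbtw.2.1
    rw [← hpe]; simp
  have ht1 : t ≠ 1 := by
    rintro rfl
    apply hbtw.2.2
    rw [← hpe]; simp
  have ht0' : 0 < t := lt_of_le_of_ne ht.1 (Ne.symm ht0)
  have ht1' : t < 1 := lt_of_le_of_ne ht.2 ht1
  have hdx : det3 a b x ≠ 0 := fun h' => hx (collinear_of_det3_eq_zero h')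
  have hdy : det3 a b y ≠ 0 := fun h' => hy (collinear_of_det3_eq_zero h')
  have hexp : (1 - t) * det3 a b x + t * det3 a b y = 0 := by
    rw [← hdp, ← hpe]
    simp only [det3, AffineMap.lineMap_apply, vadd_eq_add, vsub_eq_sub, Prod.fst_add,
      Prod.snd_add, Prod.smul_fst, Prod.smul_snd, Prod.fst_sub, Prod.snd_sub, smul_eq_mul]
    ring
  have h2 : det3 a b x * det3 a b y * (1 - t) = -(t * (det3 a b y * det3 a b y)) := by
    linear_combination det3 a b y * hexp
  nlinarith [mul_pos ht0' (mul_self_pos.mpr hdy), sub_pos.mpr ht1']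

lemma mem_triangle_of_opp {P Q R x : ℝ × ℝ}
    (hPQR : ¬ Collinear ℝ ({P, Q, R} : Set (ℝ × ℝ)))
    (n1 : ¬ Collinear ℝ ({R, x, P} : Set (ℝ × ℝ)))
    (n2 : ¬ Collinear ℝ ({R, x, Q} : Set (ℝ × ℝ)))
    (n3 : ¬ Collinear ℝ ({Q, x, P} : Set (ℝ × ℝ)))
    (n4 : ¬ Collinear ℝ ({Q, x, R} : Set (ℝ × ℝ)))
    (n5 : ¬ Collinear ℝ ({P, x, Q} : Set (ℝ × ℝ)))
    (n6 : ¬ Collinear ℝ ({P, x, R} : Set (ℝ × ℝ)))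
    (g1 : (affineSpan ℝ ({R, x} : Set (ℝ × ℝ))).SOppSide P Q)
    (g2 : (affineSpan ℝ ({Q, x} : Set (ℝ × ℝ))).SOppSide P R)
    (g3 : (affineSpan ℝ ({P, x} : Set (ℝ × ℝ))).SOppSide Q R) :
    x ∈ convexHull ℝ ({P, Q, R} : Set (ℝ × ℝ)) := by
  set a' := det3 x Q R with ha'
  set b' := det3 P x R with hb'
  set c' := det3 P Q x with hc'
  set Δ := det3 P Q R with hΔdef
  have hΔ : Δ ≠ 0 := fun h => hPQR (collinear_of_det3_eq_zero h)
  have d1 := det3_mul_neg_of_sOppSide g1 n1 n2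
  have d2 := det3_mul_neg_of_sOppSide g2 n3 n4
  have d3 := det3_mul_neg_of_sOppSide g3 n5 n6
  have e1 : det3 R x P = -b' := by simp only [det3, hb']; ring
  have e2 : det3 R x Q = a' := by simp only [det3, ha']; ring
  have e3 : det3 Q x P = c' := by simp only [det3, hc']; ring
  have e4 : det3 Q x R = -a' := by simp only [det3, ha']; ring
  have e5 : det3 P x Q = -c' := by simp only [det3, hc']; ring
  have e6 : det3 P x R = b' := by rfl
  rw [e1, e2] at d1
  rw [e3, e4] at d2
  rw [e5, e6] at d3
  have hab : 0 < a' * b' := by nlinarith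
  have hac : 0 < a' * c' := by nlinarith
  have hbc : 0 < b' * c' := by nlinarith
  have hsum : a' + b' + c' = Δ := by simp only [det3, ha', hb', hc', hΔdef]; ring
  have hsigns : (0 < a' ∧ 0 < b' ∧ 0 < c') ∨ (a' < 0 ∧ b' < 0 ∧ c' < 0) := by
    rcases mul_pos_iff.mp hab with ⟨ha, hb⟩ | ⟨ha, hb⟩
    · rcases mul_pos_iff.mp hac with ⟨_, hc⟩ | ⟨ha', _⟩
      · exact Or.inl ⟨ha, hb, hc⟩
      · linarith
    · rcases mul_pos_iff.mp hac with ⟨ha', _⟩ | ⟨_, hc⟩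
      · linarith
      · exact Or.inr ⟨ha, hb, hc⟩
  have hw : 0 ≤ a' / Δ ∧ 0 ≤ b' / Δ ∧ 0 ≤ c' / Δ := by
    rcases hsigns with ⟨ha, hb, hc⟩ | ⟨ha, hb, hc⟩
    · have hΔpos : 0 < Δ := by linarith
      exact ⟨le_of_lt (div_pos ha hΔpos), le_of_lt (div_pos hb hΔpos),
        le_of_lt (div_pos hc hΔpos)⟩
    · have hΔneg : Δ < 0 := by linarith
      exact ⟨le_of_lt (div_pos_iff.mpr (Or.inr ⟨ha, hΔneg⟩)),
        le_of_lt (div_pos_iff.mpr (Or.inr ⟨hb, hΔneg⟩)),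
        le_of_lt (div_pos_iff.mpr (Or.inr ⟨hc, hΔneg⟩))⟩
  have hsum1 : a' / Δ + b' / Δ + c' / Δ = 1 := by
    field_simp
    linarith [hsum]
  have hx1 : a' * P.1 + b' * Q.1 + c' * R.1 = Δ * x.1 := by
    simp only [det3, ha', hb', hc', hΔdef]; ring
  have hx2 : a' * P.2 + b' * Q.2 + c' * R.2 = Δ * x.2 := by
    simp only [det3, ha', hb', hc', hΔdef]; ring
  have hcomb : (a' / Δ) • P + (b' / Δ) • Q + (c' / Δ) • R = x := by
    apply Prod.ext
    · simp only [Prod.fst_add, Prod.smul_fst, smul_eq_mul]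
      field_simp
      linarith [hx1]
    · simp only [Prod.snd_add, Prod.smul_snd, smul_eq_mul]
      field_simp
      linarith [hx2]
  have hw0 : ∀ i ∈ (Finset.univ : Finset (Fin 3)), 0 ≤ ![a' / Δ, b' / Δ, c' / Δ] i := by
    intro i _
    fin_cases i
    · exact hw.1
    · exact hw.2.1
    · exact hw.2.2
  have hws : 0 < ∑ i ∈ (Finset.univ : Finset (Fin 3)), ![a' / Δ, b' / Δ, c' / Δ] i := by
    rw [Fin.sum_univ_three]
    simp only [Matrix.cons_val_zero, Matrix.cons_val_one, Matrix.head_cons,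
      Matrix.cons_val_two, Matrix.tail_cons]
    rw [hsum1]; norm_num
  have hz : ∀ i ∈ (Finset.univ : Finset (Fin 3)),
      ![P, Q, R] i ∈ ({P, Q, R} : Set (ℝ × ℝ)) := by
    intro i _
    fin_cases i <;> simp
  have hmem := Finset.centerMass_mem_convexHull (Finset.univ : Finset (Fin 3)) hw0 hws hz
  convert hmem using 1
  rw [Finset.centerMass]
  rw [Fin.sum_univ_three, Fin.sum_univ_three]
  simp only [Matrix.cons_val_zero, Matrix.cons_val_one, Matrix.head_cons,
    Matrix.cons_val_two, Matrix.tail_cons]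
  rw [hsum1, inv_one, one_smul, hcomb]

lemma card_filter_bind_pure {α β : Type} (U : Finset α) (f : α → β)
    (hf : Function.Injective f) (p : β → Prop) :
    (((do let a ← U; pure (f a)) : Finset β).filter p).card
      = (U.filter (fun a => p (f a))).card := by
  have h1 : ((do let a ← U; pure (f a)) : Finset β) = U.image f := by
    show U >>= (fun a => pure (f a)) = U.image f
    rw [show (U >>= (fun a => pure (f a))) = U.sup (fun a => {f a}) from rfl]
    exact Finset.sup_singleton_apply U f
  rw [h1, Finset.filter_image]
  exact Finset.card_image_of_injective _ hf

lemma sepCount_eq_card (Pts : Finset (ℝ × ℝ)) (P Q : ℝ × ℝ) :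
    sepCount Pts P Q = ((Finset.powersetCard 2 (Pts \ {P, Q})).filter
      (fun s : Finset (ℝ × ℝ) =>
        (affineSpan ℝ (↑s : Set (ℝ × ℝ))).SOppSide P Q)).card := by
  unfold sepCount
  exact card_filter_bind_pure _ _ (fun a b h => Finset.coe_injective h) _

lemma sum_bound3 {α : Type*} (U : Finset α) (F : α → ℕ) (x₀ : α) (hx₀ : x₀ ∈ U)
    (h3 : ∀ s ∈ U, F s ≤ 3) (h2 : F x₀ ≤ 2) : ∑ s ∈ U, F s + 1 ≤ 3 * U.card := by
  have h1 : ∑ s ∈ U, F s = F x₀ + ∑ s ∈ U.erase x₀, F s := (Finset.add_sum_erase U F hx₀).symm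
  have herase : ∑ s ∈ U.erase x₀, F s ≤ 3 * (U.erase x₀).card := by
    calc ∑ s ∈ U.erase x₀, F s ≤ ∑ _s ∈ U.erase x₀, 3 :=
          Finset.sum_le_sum (fun s hs => h3 s (Finset.mem_of_mem_erase hs))
      _ = 3 * (U.erase x₀).card := by rw [Finset.sum_const, smul_eq_mul, mul_comm]
  have hec : (U.erase x₀).card = U.card - 1 := Finset.card_erase_of_mem hx₀
  have hc1 : 1 ≤ U.card := Finset.card_pos.mpr ⟨x₀, hx₀⟩
  omega

lemma filter_three_le {α : Type*} (U : Finset α) (p q r : α → Prop)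
    (h : ∀ s ∈ U, ¬(p s ∧ q s ∧ r s)) :
    (U.filter p).card + (U.filter q).card + (U.filter r).card ≤ 2 * U.card := by
  classical
  rw [Finset.card_filter, Finset.card_filter, Finset.card_filter,
    ← Finset.sum_add_distrib, ← Finset.sum_add_distrib]
  calc _ ≤ ∑ _s ∈ U, 2 := by
        apply Finset.sum_le_sum
        intro s hs
        by_cases hp : p s <;> by_cases hq : q s <;> by_cases hr : r s <;>
          simp [hp, hq, hr] <;> exact absurd ⟨hp, hq, hr⟩ (h s hs)
    _ = 2 * U.card := by rw [Finset.sum_const, smul_eq_mul, mul_comm]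

lemma filter_three_lt {α : Type*} (U : Finset α) (p q r : α → Prop)
    (x₀ : α) (hx₀ : x₀ ∈ U) (hx : ¬(p x₀ ∧ q x₀ ∧ r x₀)) :
    (U.filter p).card + (U.filter q).card + (U.filter r).card + 1 ≤ 3 * U.card := by
  classical
  rw [Finset.card_filter, Finset.card_filter, Finset.card_filter,
    ← Finset.sum_add_distrib, ← Finset.sum_add_distrib]
  refine sum_bound3 U _ x₀ hx₀ (fun s _ => ?_) ?_
  · by_cases hp : p s <;> by_cases hq : q s <;> by_cases hr : r s <;> simp [hp, hq, hr]
  · by_cases hp : p x₀ <;> by_cases hq : q x₀ <;> by_cases hr : r x₀ <;>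
      simp [hp, hq, hr] <;> exact absurd ⟨hp, hq, hr⟩ hx

lemma sepCount_eq (Pts : Finset (ℝ × ℝ)) (X Y Z : ℝ × ℝ) (hZ : Z ∈ Pts)
    (hZX : Z ≠ X) (hZY : Z ≠ Y) :
    sepCount Pts X Y =
      ((Pts \ {X, Y, Z}).filter (fun x =>
          (affineSpan ℝ ({Z, x} : Set (ℝ × ℝ))).SOppSide X Y)).card
      + ((Finset.powersetCard 2 (Pts \ {X, Y, Z})).filter
          (fun s : Finset (ℝ × ℝ) =>
            (affineSpan ℝ (↑s : Set (ℝ × ℝ))).SOppSide X Y)).card := by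
  classical
  rw [sepCount_eq_card]
  rw [← Finset.card_filter_add_card_filter_not (p := fun s => Z ∈ s)]
  congr 1
  · -- point part
    symm
    apply Finset.card_bij (fun x _ => insert Z ({x} : Finset (ℝ × ℝ)))
    · intro x hx
      simp only [Finset.mem_filter, Finset.mem_sdiff, Finset.mem_insert,
        Finset.mem_singleton] at hx
      obtain ⟨⟨hxP, hxne⟩, hsep⟩ := hx
      push_neg at hxne
      simp only [Finset.mem_filter, Finset.mem_powersetCard]
      refine ⟨⟨⟨?_, ?_⟩, ?_⟩, ?_⟩
      · intro z hz
        simp only [Finset.mem_insert, Finset.mem_singleton] at hz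
        rcases hz with rfl | rfl
        · simp only [Finset.mem_sdiff, Finset.mem_insert, Finset.mem_singleton]
          exact ⟨hZ, by tauto⟩
        · simp only [Finset.mem_sdiff, Finset.mem_insert, Finset.mem_singleton]
          exact ⟨hxP, by tauto⟩
      · rw [Finset.card_insert_of_notMem (by simp [Ne.symm hxne.2.2]), Finset.card_singleton]
      · simpa using hsep
      · simp
    · intro a ha b hb hab
      have : a ∈ insert Z ({b} : Finset (ℝ × ℝ)) := by
        rw [← hab]; simp
      simp only [Finset.mem_insert, Finset.mem_singleton] at this
      rcases this with rfl | h
      · simp only [Finset.mem_filter, Finset.mem_sdiff, Finset.mem_insert,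
          Finset.mem_singleton] at ha
        tauto
      · exact h
    · intro s hs
      simp only [Finset.mem_filter, Finset.mem_powersetCard] at hs
      obtain ⟨⟨⟨hsub, hcard⟩, hsep⟩, hZs⟩ := hs
      obtain ⟨u, v, huv, rfl⟩ := Finset.card_eq_two.mp hcard
      simp only [Finset.mem_insert, Finset.mem_singleton] at hZs
      rcases hZs with rfl | rfl
      · refine ⟨v, ?_, ?_⟩
        · simp only [Finset.mem_filter, Finset.mem_sdiff, Finset.mem_insert,
            Finset.mem_singleton]
          have hv := hsub (by simp : v ∈ ({Z, v} : Finset (ℝ × ℝ)))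
          simp only [Finset.mem_sdiff, Finset.mem_insert, Finset.mem_singleton] at hv
          refine ⟨⟨hv.1, by tauto⟩, by simpa using hsep⟩
        · rfl
      · refine ⟨u, ?_, ?_⟩
        · simp only [Finset.mem_filter, Finset.mem_sdiff, Finset.mem_insert,
            Finset.mem_singleton]
          have hu := hsub (by simp : u ∈ ({u, Z} : Finset (ℝ × ℝ)))
          simp only [Finset.mem_sdiff, Finset.mem_insert, Finset.mem_singleton] at hu
          refine ⟨⟨hu.1, by tauto⟩, ?_⟩
          · have : ({Z, u} : Set (ℝ × ℝ)) = ↑({u, Z} : Finset (ℝ × ℝ)) := by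
              simp [Set.pair_comm]
            rw [this]; exact hsep
        · rw [Finset.pair_comm]
  · -- set part
    congr 1
    ext s
    simp only [Finset.mem_filter, Finset.mem_powersetCard, Finset.subset_iff,
      Finset.mem_sdiff, Finset.mem_insert, Finset.mem_singleton]
    constructor
    · rintro ⟨⟨⟨hsub, hcard⟩, hsep⟩, hZs⟩
      refine ⟨⟨fun {x} hx => ?_, hcard⟩, hsep⟩
      obtain ⟨hxP, hxne⟩ := hsub hx
      refine ⟨hxP, ?_⟩
      push_neg at hxne ⊢
      exact ⟨hxne.1, hxne.2, fun h => hZs (h ▸ hx)⟩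
    · rintro ⟨⟨hsub, hcard⟩, hsep⟩
      refine ⟨⟨⟨fun {x} hx => ?_, hcard⟩, hsep⟩, fun hZs => ?_⟩
      · obtain ⟨hxP, hxne⟩ := hsub hx
        push_neg at hxne ⊢
        exact ⟨hxP, hxne.1, hxne.2.1⟩
      · obtain ⟨_, hne⟩ := hsub hZs
        push_neg at hne
        exact hne.2.2 rfl

set_option maxHeartbeats 1600000 in
/-- If the convex hull of a configuration of `n` points in general position has size `3`, and
`P`, `Q`, `R` are three distinct points of the configuration which are not exactly the three
hull vertices, then `n(P,Q) + n(P,R) + n(Q,R) < n² - 4n + 3`. -/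
theorem sepCount_sum_lt_of_not_hull (n : ℕ) (Pts : Finset (ℝ × ℝ))
    (hgen : GenPos Pts) (hcard : Pts.card = n)
    (hhull : (hullVertices Pts).ncard = 3)
    (P Q R : ℝ × ℝ) (hP : P ∈ Pts) (hQ : Q ∈ Pts) (hR : R ∈ Pts)
    (hPQ : P ≠ Q) (hPR : P ≠ R) (hQR : Q ≠ R)
    (hnot : ({P, Q, R} : Set (ℝ × ℝ)) ≠ hullVertices Pts) :
    (sepCount Pts P Q + sepCount Pts P R + sepCount Pts Q R : ℤ)
      < (n : ℤ)^2 - 4 * n + 3 := by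
  classical
  have e1 := sepCount_eq Pts P Q R hR (Ne.symm hPR) (Ne.symm hQR)
  have e2 := sepCount_eq Pts P R Q hQ (Ne.symm hPQ) hQR
  have e3 := sepCount_eq Pts Q R P hP hPQ hPR
  have hTQ : Pts \ {P, R, Q} = Pts \ {P, Q, R} := by
    ext z
    simp only [Finset.mem_sdiff, Finset.mem_insert, Finset.mem_singleton]
    tauto
  have hTP : Pts \ {Q, R, P} = Pts \ {P, Q, R} := by
    ext z
    simp only [Finset.mem_sdiff, Finset.mem_insert, Finset.mem_singleton]
    tauto
  rw [hTQ] at e2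
  rw [hTP] at e3
  set T : Finset (ℝ × ℝ) := Pts \ {P, Q, R} with hT
  have hTmem : ∀ x ∈ T, x ∈ Pts ∧ x ≠ P ∧ x ≠ Q ∧ x ≠ R := by
    intro x hx
    rw [hT, Finset.mem_sdiff] at hx
    simp only [Finset.mem_insert, Finset.mem_singleton] at hx
    tauto
  -- B-part bound
  have hBbound : ((Finset.powersetCard 2 T).filter
        (fun s : Finset (ℝ × ℝ) => (affineSpan ℝ (↑s : Set (ℝ × ℝ))).SOppSide P Q)).card
      + ((Finset.powersetCard 2 T).filter
        (fun s : Finset (ℝ × ℝ) => (affineSpan ℝ (↑s : Set (ℝ × ℝ))).SOppSide P R)).card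
      + ((Finset.powersetCard 2 T).filter
        (fun s : Finset (ℝ × ℝ) => (affineSpan ℝ (↑s : Set (ℝ × ℝ))).SOppSide Q R)).card
      ≤ 2 * (Finset.powersetCard 2 T).card := by
    apply filter_three_le
    intro s hs
    rw [Finset.mem_powersetCard] at hs
    obtain ⟨hsub, hcard2⟩ := hs
    obtain ⟨u, v, huv, rfl⟩ := Finset.card_eq_two.mp hcard2
    rintro ⟨o1, o2, o3⟩
    have hu := hTmem u (hsub (by simp))
    have hv := hTmem v (hsub (by simp))
    have hcoe : (↑({u, v} : Finset (ℝ × ℝ)) : Set (ℝ × ℝ)) = ({u, v} : Set (ℝ × ℝ)) := by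
      simp
    rw [hcoe] at o1 o2 o3
    have dP := det3_mul_neg_of_sOppSide o1
      (hgen u hu.1 v hv.1 P hP huv hu.2.1 hv.2.1)
      (hgen u hu.1 v hv.1 Q hQ huv hu.2.2.1 hv.2.2.1)
    have dR := det3_mul_neg_of_sOppSide o2
      (hgen u hu.1 v hv.1 P hP huv hu.2.1 hv.2.1)
      (hgen u hu.1 v hv.1 R hR huv hu.2.2.2 hv.2.2.2)
    have dQ := det3_mul_neg_of_sOppSide o3
      (hgen u hu.1 v hv.1 Q hQ huv hu.2.2.1 hv.2.2.1)
      (hgen u hu.1 v hv.1 R hR huv hu.2.2.2 hv.2.2.2)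
    nlinarith [mul_pos_of_neg_of_neg dP dR, sq_nonneg (det3 u v P)]
  -- A-part: case distinction
  by_cases hex : ∃ x₀ ∈ T,
      ¬((affineSpan ℝ ({R, x₀} : Set (ℝ × ℝ))).SOppSide P Q
        ∧ (affineSpan ℝ ({Q, x₀} : Set (ℝ × ℝ))).SOppSide P R
        ∧ (affineSpan ℝ ({P, x₀} : Set (ℝ × ℝ))).SOppSide Q R)
  · obtain ⟨x₀, hx₀T, hx₀⟩ := hex
    have hAbound := filter_three_lt T
      (fun x => (affineSpan ℝ ({R, x} : Set (ℝ × ℝ))).SOppSide P Q)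
      (fun x => (affineSpan ℝ ({Q, x} : Set (ℝ × ℝ))).SOppSide P R)
      (fun x => (affineSpan ℝ ({P, x} : Set (ℝ × ℝ))).SOppSide Q R)
      x₀ hx₀T hx₀
    -- cardinalities
    have hsub3 : ({P, Q, R} : Finset (ℝ × ℝ)) ⊆ Pts := by
      intro z hz
      simp only [Finset.mem_insert, Finset.mem_singleton] at hz
      rcases hz with rfl | rfl | rfl <;> assumption
    have hc3 : ({P, Q, R} : Finset (ℝ × ℝ)).card = 3 := by
      rw [Finset.card_insert_of_notMem (by simp [hPQ, hPR]),
        Finset.card_insert_of_notMem (by simp [hQR]), Finset.card_singleton]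
    have hTcard : T.card = n - 3 := by
      rw [hT, Finset.card_sdiff_of_subset hsub3, hc3, hcard]
    have hn3 : 3 ≤ n := by
      rw [← hc3, ← hcard]
      exact Finset.card_le_card hsub3
    have hT1 : 1 ≤ T.card := Finset.card_pos.mpr ⟨x₀, hx₀T⟩
    obtain ⟨m, hm⟩ : ∃ m, T.card = m + 1 := ⟨T.card - 1, by omega⟩
    have hUcard : (Finset.powersetCard 2 T).card = T.card * (T.card - 1) / 2 := by
      rw [Finset.card_powersetCard, Nat.choose_two_right]
    have hU2 : 2 * (Finset.powersetCard 2 T).card ≤ (m + 1) * m := by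
      rw [hUcard, hm]
      simp only [Nat.add_sub_cancel]
      have := Nat.div_mul_le_self ((m + 1) * m) 2
      omega
    -- combine
    have hAle : ((T.filter (fun x => (affineSpan ℝ ({R, x} : Set (ℝ × ℝ))).SOppSide P Q)).card
        + (T.filter (fun x => (affineSpan ℝ ({Q, x} : Set (ℝ × ℝ))).SOppSide P R)).card
        + (T.filter (fun x => (affineSpan ℝ ({P, x} : Set (ℝ × ℝ))).SOppSide Q R)).card)
        ≤ 3 * m + 2 := by
      rw [hm] at hAbound
      omega
    have hBle : (((Finset.powersetCard 2 T).filter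
          (fun s : Finset (ℝ × ℝ) => (affineSpan ℝ (↑s : Set (ℝ × ℝ))).SOppSide P Q)).card
        + ((Finset.powersetCard 2 T).filter
          (fun s : Finset (ℝ × ℝ) => (affineSpan ℝ (↑s : Set (ℝ × ℝ))).SOppSide P R)).card
        + ((Finset.powersetCard 2 T).filter
          (fun s : Finset (ℝ × ℝ) => (affineSpan ℝ (↑s : Set (ℝ × ℝ))).SOppSide Q R)).card)
        ≤ (m + 1) * m := le_trans hBbound hU2
    have hsum6 : sepCount Pts P Q + sepCount Pts P R + sepCount Pts Q R
        = ((T.filter (fun x => (affineSpan ℝ ({R, x} : Set (ℝ × ℝ))).SOppSide P Q)).card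
          + (T.filter (fun x => (affineSpan ℝ ({Q, x} : Set (ℝ × ℝ))).SOppSide P R)).card
          + (T.filter (fun x => (affineSpan ℝ ({P, x} : Set (ℝ × ℝ))).SOppSide Q R)).card)
          + (((Finset.powersetCard 2 T).filter
            (fun s : Finset (ℝ × ℝ) => (affineSpan ℝ (↑s : Set (ℝ × ℝ))).SOppSide P Q)).card
          + ((Finset.powersetCard 2 T).filter
            (fun s : Finset (ℝ × ℝ) => (affineSpan ℝ (↑s : Set (ℝ × ℝ))).SOppSide P R)).card
          + ((Finset.powersetCard 2 T).filter
            (fun s : Finset (ℝ × ℝ) => (affineSpan ℝ (↑s : Set (ℝ × ℝ))).SOppSide Q R)).card) := by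
      rw [e1, e2, e3]
      ring
    have hfinal : sepCount Pts P Q + sepCount Pts P R + sepCount Pts Q R
        ≤ m * m + 4 * m + 2 := by
      rw [hsum6]
      calc _ ≤ (3 * m + 2) + (m + 1) * m := add_le_add hAle hBle
        _ = m * m + 4 * m + 2 := by ring
    have hnm : n = m + 4 := by omega
    have hcast : ((sepCount Pts P Q + sepCount Pts P R + sepCount Pts Q R : ℕ) : ℤ)
        ≤ (m : ℤ) * m + 4 * m + 2 := by exact_mod_cast hfinal
    have hncast : (n : ℤ) = (m : ℤ) + 4 := by exact_mod_cast hnm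
    rw [hncast]
    push_cast at hcast ⊢
    nlinarith [hcast]
  · -- all points of T satisfy all three separations: contradiction with hull size 3
    exfalso
    push_neg at hex
    have hallmem : (↑Pts : Set (ℝ × ℝ)) ⊆ convexHull ℝ ({P, Q, R} : Set (ℝ × ℝ)) := by
      intro y hy
      rw [Finset.mem_coe] at hy
      by_cases hyP : y = P
      · exact subset_convexHull ℝ _ (by simp [hyP])
      by_cases hyQ : y = Q
      · exact subset_convexHull ℝ _ (by simp [hyQ])
      by_cases hyR : y = R
      · exact subset_convexHull ℝ _ (by simp [hyR])
      have hyT : y ∈ T := by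
        rw [hT, Finset.mem_sdiff]
        simp only [Finset.mem_insert, Finset.mem_singleton]
        tauto
      obtain ⟨g1, g2, g3⟩ := hex y hyT
      exact mem_triangle_of_opp
        (hgen P hP Q hQ R hR hPQ hPR hQR)
        (hgen R hR y hy P hP (fun h => hyR h.symm) (Ne.symm hPR) hyP)
        (hgen R hR y hy Q hQ (fun h => hyR h.symm) (Ne.symm hQR) hyQ)
        (hgen Q hQ y hy P hP (fun h => hyQ h.symm) (Ne.symm hPQ) hyP)
        (hgen Q hQ y hy R hR (fun h => hyQ h.symm) hQR hyR)
        (hgen P hP y hy Q hQ (fun h => hyP h.symm) hPQ hyQ)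
        (hgen P hP y hy R hR (fun h => hyP h.symm) hPR hyR)
        g1 g2 g3
    have hhulleq : convexHull ℝ (↑Pts : Set (ℝ × ℝ)) = convexHull ℝ ({P, Q, R} : Set (ℝ × ℝ)) := by
      apply le_antisymm
      · exact convexHull_min hallmem (convex_convexHull ℝ _)
      · apply convexHull_mono
        intro z hz
        simp only [Set.mem_insert_iff, Set.mem_singleton_iff] at hz
        rcases hz with rfl | rfl | rfl <;> simpa using ‹_ ∈ Pts›
    have hHV : hullVertices Pts ⊆ ({P, Q, R} : Set (ℝ × ℝ)) := by
      rw [hullVertices, hhulleq]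
      exact extremePoints_convexHull_subset
    have h3 : ({P, Q, R} : Set (ℝ × ℝ)).ncard = 3 :=
      Set.ncard_eq_three.mpr ⟨P, Q, R, hPQ, hPR, hQR, rfl⟩
    have heq : hullVertices Pts = ({P, Q, R} : Set (ℝ × ℝ)) :=
      Set.eq_of_subset_of_ncard_le hHV (by rw [h3, hhull]) (Set.toFinite _)
    exact hnot heq.symm

end
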